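/- Let β ∈ Π_aff^{re,+} be an affine positive real root with β < c. If β_1, …, β_r ∈ Π_aff^{re,+} satisfy Σ_{i=1}^{r} β_i ≤ β, then the ordinary product of reflections satisfies s_{β_1} s_{β_2} ⋯ s_{β_r} ≤ s_β in the Bruhat order on W_aff. -/

import Mathlib

open scoped BigOperators

namespace AffA

/-- Elements `⟨w, λ⟩` representing `w · t_λ` in the affine Weyl group
`W_aff = W ⋉ Q∨` of type `A_{n-1}^{(1)}`; the translation part `λ` is recorded
in `ε`-coordinates. -/
@[ext]
structure Aff (n : ℕ) where
  w : Equiv.Perm (Fin n)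
  t : Fin n → ℤ

namespace Aff

variable {n : ℕ}

instance : Nonempty (Aff n) := ⟨⟨1, 0⟩⟩

/-- multiplication: `(w t_λ)(v t_μ) = (wv) t_{v⁻¹λ + μ}`. -/
def mul' (x y : Aff n) : Aff n := ⟨x.w * y.w, fun i => x.t (y.w i) + y.t i⟩

def inv' (x : Aff n) : Aff n := ⟨x.w⁻¹, fun i => - x.t (x.w⁻¹ i)⟩

instance : Group (Aff n) where
  mul := mul'
  one := ⟨1, 0⟩
  inv := inv'
  mul_assoc a b c := by
    show mul' (mul' a b) c = mul' a (mul' b c)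
    simp only [mul', Aff.mk.injEq]
    refine ⟨mul_assoc _ _ _, funext fun i => ?_⟩
    simp [Equiv.Perm.mul_apply, add_assoc]
  one_mul a := by
    obtain ⟨aw, av⟩ := a
    show mul' ⟨1, 0⟩ ⟨aw, av⟩ = ⟨aw, av⟩
    simp only [mul', Aff.mk.injEq]
    exact ⟨one_mul _, funext fun i => by simp⟩
  mul_one a := by
    obtain ⟨aw, av⟩ := a
    show mul' ⟨aw, av⟩ ⟨1, 0⟩ = ⟨aw, av⟩
    simp only [mul', Aff.mk.injEq]
    exact ⟨mul_one _, funext fun i => by simp⟩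
  inv_mul_cancel a := by
    obtain ⟨aw, av⟩ := a
    show mul' (inv' ⟨aw, av⟩) ⟨aw, av⟩ = ⟨1, 0⟩
    simp only [mul', inv', Aff.mk.injEq]
    exact ⟨inv_mul_cancel _, funext fun i => by simp⟩

/-- cyclic successor on the vertices `α_0, …, α_{n-1}` of the affine Dynkin diagram. -/
def fsucc (i : Fin n) : Fin n :=
  ⟨(i.val + 1) % n, Nat.mod_lt _ (Nat.lt_of_le_of_lt (Nat.zero_le _) i.isLt)⟩

/-- the coefficient of `α_0`. -/
def coeff0 (a : Fin n → ℤ) : ℤ := if h : 0 < n then a ⟨0, h⟩ else 0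

/-- the `ε`-coordinates of the finite part of an element of the affine root
lattice written in the coordinates of the simple roots `α_0, …, α_{n-1}`
(`δ` is sent to `0`). -/
def finPart (a : Fin n → ℤ) : Fin n → ℤ := fun i => a (fsucc i) - a i

/-- `c = δ = α_0 + α_1 + ⋯ + α_{n-1}`, in simple root coordinates. -/
def cvec (n : ℕ) : Fin n → ℤ := fun _ => 1

/-- the affine Cartan matrix of type `A_{n-1}^{(1)}` (for `n ≥ 3`). -/
def cartan (i j : Fin n) : ℤ :=
  if i = j then 2 else if j = fsucc i ∨ i = fsucc j then -1 else 0

/-- the natural pairing `⟨a, b∨⟩` of elements of the affine root lattice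
(simple root coordinates). -/
def pairing (a b : Fin n → ℤ) : ℤ := ∑ i : Fin n, ∑ j : Fin n, a i * cartan i j * b j

/-- real roots of the affine root system: lattice vectors of norm `2`. -/
def IsRealRoot (a : Fin n → ℤ) : Prop := pairing a a = 2

/-- affine positive real roots: real roots with nonnegative coordinates. -/
def IsPosRoot (a : Fin n → ℤ) : Prop := IsRealRoot a ∧ ∀ i, 0 ≤ a i

/-- perpendicularity of affine roots. -/
def Perp (a b : Fin n → ℤ) : Prop := pairing a b = 0

/-- the support of an affine root. -/
def supp (a : Fin n → ℤ) : Finset (Fin n) := Finset.univ.filter fun i => a i ≠ 0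

/-- the supports of `a` and `b` are disconnected in the affine Dynkin diagram
(a cycle on `α_0, …, α_{n-1}`): no vertex of one is equal or adjacent to a
vertex of the other. -/
def Disconn (a b : Fin n → ℤ) : Prop :=
  ∀ i j : Fin n, a i ≠ 0 → b j ≠ 0 → i ≠ j ∧ j ≠ fsucc i ∧ i ≠ fsucc j

/-- for roots `a, b < c` (0–1 vectors), `a ∩ b = Σ_{α_i ∈ supp a ∩ supp b} α_i`. -/
def inter (a b : Fin n → ℤ) : Fin n → ℤ :=
  fun i => if a i ≠ 0 ∧ b i ≠ 0 then 1 else 0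

instance : Nonempty (Equiv.Perm (Fin n)) := ⟨1⟩

/-- the reflection `s_β = s_α t_{mα}` associated to the real root `β = α + mδ`
(given in simple root coordinates). -/
noncomputable def sref (a : Fin n → ℤ) : Aff n :=
  ⟨Classical.epsilon fun w : Equiv.Perm (Fin n) => ∃ p q : Fin n,
      finPart a = Pi.single p 1 - Pi.single q 1 ∧ w = Equiv.swap p q,
    fun i => coeff0 a * finPart a i⟩

/-- the simple reflections `s_0, …, s_{n-1}`. -/
noncomputable def simple (i : Fin n) : Aff n := sref (Pi.single i 1)

/-- the Coxeter length, via the Iwahori–Matsumoto formula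
`ℓ(w t_λ) = Σ_{γ ∈ Π⁺} |χ(w·γ < 0) + ⟨λ, γ⟩|`. -/
def len (x : Aff n) : ℕ :=
  ∑ p : Fin n, ∑ q : Fin n,
    if p < q then ((if x.w q < x.w p then (1 : ℤ) else 0) + (x.t p - x.t q)).natAbs else 0

/-- translation `t_v` by an element `v` of the (co)root lattice given in
`ε`-coordinates. -/
def trE (v : Fin n → ℤ) : Aff n := ⟨1, v⟩

/-- a Bruhat step: an edge of the moment graph which increases the length. -/
def bstep (u v : Aff n) : Prop :=
  (∃ a, IsPosRoot a ∧ v = u * sref a) ∧ len u < len v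

/-- the Bruhat order: `u ≤ v` iff there is an increasing chain from `u` to `v`
in the moment graph. -/
def ble (u v : Aff n) : Prop := Relation.ReflTransGen bstep u v

/-- there is a chain in the moment graph from `u` to `v` of total degree `≤ d`. -/
def ChainTo (d : Fin n → ℤ) (u v : Aff n) : Prop :=
  ∃ l : List (Fin n → ℤ),
    (∀ b ∈ l, IsPosRoot b) ∧ l.sum ≤ d ∧ v = u * (l.map sref).prod

/-- the set of elements reachable from some `u' ≤ u` by a chain of degree `≤ d`. -/
def nbhdSet (d : Fin n → ℤ) (u : Aff n) : Set (Aff n) :=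
  {v | ∃ u', ble u' u ∧ ChainTo d u' v}

/-- the combinatorial curve neighborhood `Γ_d(u)`: the Bruhat-maximal elements
among those reachable from some `u' ≤ u` by a chain of degree `≤ d`. -/
def curveNbhd (d : Fin n → ℤ) (u : Aff n) : Set (Aff n) :=
  {v | v ∈ nbhdSet d u ∧ ∀ x ∈ nbhdSet d u, ble v x → x = v}

/-- one step of the Hecke product. -/
noncomputable def heckeStep (u : Aff n) (i : Fin n) : Aff n :=
  if len u < len (u * simple i) then u * simple i else u

/-- the Hecke product `u · v`: multiply `u` on the right, left to right, by the
letters of a reduced word for `v`. -/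
noncomputable def heckeMul (u v : Aff n) : Aff n :=
  (Classical.epsilon fun l : List (Fin n) =>
      (l.map simple).prod = v ∧ l.length = len v).foldl heckeStep u

/-- the Hecke product `s_{β_1} · s_{β_2} · ⋯ · s_{β_r}` of the reflections of a
list of roots. -/
noncomputable def heckeList (l : List (Fin n → ℤ)) : Aff n :=
  l.foldl (fun u b => heckeMul u (sref b)) 1

/-- the defining recursion for `z_d`: `z_0 = id` and `z_d = s_α · z_{d-α}`
(Hecke product), where `α` is any maximal root with `α ≤ d`. -/
inductive IsZ : (Fin n → ℤ) → Aff n → Prop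
  | zero : IsZ 0 1
  | step {d a : Fin n → ℤ} {x : Aff n} :
      IsPosRoot a → a ≤ d →
      (∀ b, IsPosRoot b → b ≤ d → a ≤ b → b = a) →
      IsZ (d - a) x → IsZ d (heckeMul (sref a) x)

end Aff
end AffA

namespace AffA
namespace Aff

variable {n : ℕ}

/-! ### basic cyclic successor/predecessor machinery -/

theorem fsucc_val (i : Fin n) : (fsucc i).val = if i.val = n - 1 then 0 else i.val + 1 := by
  have hn : 0 < n := Nat.lt_of_le_of_lt (Nat.zero_le _) i.isLt
  have hi := i.isLt
  show (i.val + 1) % n = _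
  split_ifs with h
  · have : i.val + 1 = n := by omega
    rw [this, Nat.mod_self]
  · exact Nat.mod_eq_of_lt (by omega)

/-- cyclic predecessor -/
def fpred (i : Fin n) : Fin n :=
  ⟨(i.val + (n - 1)) % n, Nat.mod_lt _ (Nat.lt_of_le_of_lt (Nat.zero_le _) i.isLt)⟩

theorem fpred_val (i : Fin n) : (fpred i).val = if i.val = 0 then n - 1 else i.val - 1 := by
  have hn : 0 < n := Nat.lt_of_le_of_lt (Nat.zero_le _) i.isLt
  have hi := i.isLt
  show (i.val + (n - 1)) % n = _
  split_ifs with h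
  · rw [h, Nat.zero_add]; exact Nat.mod_eq_of_lt (by omega)
  · have : i.val + (n - 1) = n + (i.val - 1) := by omega
    rw [this, Nat.add_mod_left]
    exact Nat.mod_eq_of_lt (by omega)

theorem fpred_fsucc (i : Fin n) : fpred (fsucc i) = i := by
  have hi := i.isLt
  have hn : 0 < n := by omega
  apply Fin.ext
  show ((i.val + 1) % n + (n - 1)) % n = i.val
  by_cases h : i.val = n - 1
  · have e1 : (i.val + 1) % n = 0 := by rw [show i.val + 1 = n by omega, Nat.mod_self]
    rw [e1, show 0 + (n - 1) = n - 1 by omega,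
      Nat.mod_eq_of_lt (show n - 1 < n by omega)]
    omega
  · have e1 : (i.val + 1) % n = i.val + 1 := Nat.mod_eq_of_lt (by omega)
    rw [e1, show i.val + 1 + (n - 1) = n + i.val by omega, Nat.add_mod_left,
      Nat.mod_eq_of_lt hi]

theorem fsucc_fpred (i : Fin n) : fsucc (fpred i) = i := by
  have hi := i.isLt
  have hn : 0 < n := by omega
  apply Fin.ext
  show ((i.val + (n - 1)) % n + 1) % n = i.val
  by_cases h : i.val = 0
  · have e1 : (i.val + (n - 1)) % n = n - 1 := by
      rw [h, Nat.zero_add]; exact Nat.mod_eq_of_lt (by omega)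
    rw [e1, show n - 1 + 1 = n by omega, Nat.mod_self]
    omega
  · have e1 : (i.val + (n - 1)) % n = i.val - 1 := by
      rw [show i.val + (n - 1) = n + (i.val - 1) by omega, Nat.add_mod_left]
      exact Nat.mod_eq_of_lt (by omega)
    rw [e1, show i.val - 1 + 1 = i.val by omega]
    exact Nat.mod_eq_of_lt hi

/-- the cyclic rotation as a permutation -/
def cyc {n : ℕ} : Equiv.Perm (Fin n) := ⟨fsucc, fpred, fpred_fsucc, fsucc_fpred⟩

@[simp] theorem cyc_apply (i : Fin n) : cyc i = fsucc i := rfl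
@[simp] theorem cyc_inv_apply (i : Fin n) : cyc⁻¹ i = fpred i := rfl

theorem fsucc_ne (hn : 2 ≤ n) (i : Fin n) : fsucc i ≠ i := by
  have hi := i.isLt
  intro h
  have := congrArg Fin.val h
  rw [fsucc_val] at this
  split_ifs at this <;> omega

theorem fsucc_fsucc_ne (hn : 3 ≤ n) (i : Fin n) : fsucc (fsucc i) ≠ i := by
  have hi := i.isLt
  intro h
  have := congrArg Fin.val h
  rw [fsucc_val, fsucc_val] at this
  have h2 := (fsucc i).isLt
  split_ifs at this <;> omega

theorem fpred_eq_iff (i p : Fin n) : fpred i = p ↔ i = fsucc p := by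
  constructor
  · rintro rfl; rw [fsucc_fpred]
  · rintro rfl; rw [fpred_fsucc]

theorem coeff0_eq (hn : 0 < n) (a : Fin n → ℤ) :
    coeff0 a = a ⟨0, hn⟩ := by
  unfold coeff0
  rw [dif_pos hn]

/-! ### root theory -/

theorem sum_fsucc_sq (a : Fin n → ℤ) :
    ∑ i : Fin n, a (fsucc i) * a (fsucc i) = ∑ i : Fin n, a i * a i :=
  Equiv.sum_comp (cyc : Equiv.Perm (Fin n)) (fun i => a i * a i)

theorem sum_fpred_prod (a : Fin n → ℤ) :
    ∑ i : Fin n, a i * a (fpred i) = ∑ i : Fin n, a (fsucc i) * a i := by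
  have := Equiv.sum_comp (cyc : Equiv.Perm (Fin n)) (fun i => a i * a (fpred i))
  rw [← this]
  apply Finset.sum_congr rfl
  intro i _
  simp [fpred_fsucc]

theorem cartan_eq (hn : 3 ≤ n) (i j : Fin n) :
    cartan i j = (if j = i then 2 else 0) + (if j = fsucc i then -1 else 0)
      + (if i = fsucc j then -1 else 0) := by
  have h2 : (2:ℕ) ≤ n := by omega
  unfold cartan
  by_cases h1 : i = j
  · subst h1
    have hne : i ≠ fsucc i := Ne.symm (fsucc_ne h2 i)
    simp [hne]
  · rw [if_neg h1]
    by_cases hs1 : j = fsucc i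
    · have hs2 : ¬ i = fsucc j := by
        intro h
        rw [hs1] at h
        exact fsucc_fsucc_ne hn i h.symm
      rw [if_pos (Or.inl hs1), if_neg (fun h => h1 h.symm), if_pos hs1, if_neg hs2]
      norm_num
    · by_cases hs2 : i = fsucc j
      · rw [if_pos (Or.inr hs2), if_neg (fun h => h1 h.symm), if_neg hs1, if_pos hs2]
        norm_num
      · rw [if_neg (by tauto), if_neg (fun h => h1 h.symm), if_neg hs1, if_neg hs2]
        norm_num

theorem pairing_self (hn : 3 ≤ n) (a : Fin n → ℤ) :
    pairing a a = ∑ i : Fin n, (finPart a i)^2 := by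
  unfold pairing
  have hrow : ∀ i : Fin n, ∑ j : Fin n, a i * cartan i j * a j
      = 2 * (a i * a i) - a i * a (fsucc i) - a i * a (fpred i) := by
    intro i
    have : ∀ j : Fin n, a i * cartan i j * a j
        = (if j = i then 2 * (a i * a j) else 0)
          + (if j = fsucc i then -(a i * a j) else 0)
          + (if j = fpred i then -(a i * a j) else 0) := by
      intro j
      rw [cartan_eq hn]
      have hiff : (i = fsucc j) ↔ (j = fpred i) :=
        ⟨fun h => by rw [h, fpred_fsucc], fun h => by rw [h, fsucc_fpred]⟩
      rw [if_congr hiff (Eq.refl (-1:ℤ)) (Eq.refl (0:ℤ))]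
      split_ifs <;> ring
    rw [Finset.sum_congr rfl (fun j _ => this j)]
    rw [Finset.sum_add_distrib, Finset.sum_add_distrib,
      Finset.sum_ite_eq' Finset.univ i (fun j => 2 * (a i * a j)),
      Finset.sum_ite_eq' Finset.univ (fsucc i) (fun j => -(a i * a j)),
      Finset.sum_ite_eq' Finset.univ (fpred i) (fun j => -(a i * a j))]
    simp only [Finset.mem_univ, if_pos]
    ring
  rw [Finset.sum_congr rfl (fun i _ => hrow i)]
  have hexp : ∀ i : Fin n, (finPart a i)^2
      = a (fsucc i) * a (fsucc i) - 2 * (a i * a (fsucc i)) + a i * a i := by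
    intro i; unfold finPart; ring
  rw [Finset.sum_congr rfl (fun i _ => hexp i)]
  rw [Finset.sum_sub_distrib, Finset.sum_sub_distrib, Finset.sum_add_distrib,
    Finset.sum_sub_distrib]
  rw [sum_fsucc_sq, sum_fpred_prod]
  have h1 : ∑ i : Fin n, 2 * (a i * a i) = 2 * ∑ i : Fin n, a i * a i := by
    rw [Finset.mul_sum]
  have h2 : ∑ i : Fin n, 2 * (a i * a (fsucc i)) = 2 * ∑ i : Fin n, a i * a (fsucc i) := by
    rw [Finset.mul_sum]
  have h3 : ∑ i : Fin n, a (fsucc i) * a i = ∑ i : Fin n, a i * a (fsucc i) := by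
    apply Finset.sum_congr rfl; intro i _; ring
  rw [h1, h2, h3]
  ring

theorem sum_finPart (a : Fin n → ℤ) : ∑ i : Fin n, finPart a i = 0 := by
  unfold finPart
  rw [Finset.sum_sub_distrib]
  rw [show ∑ i : Fin n, a (fsucc i) = ∑ i : Fin n, a i from
    Equiv.sum_comp (cyc : Equiv.Perm (Fin n)) a]
  ring

end Aff
end AffA

namespace AffA
namespace Aff

variable {n : ℕ}

theorem single_sub_single_sq_sum (p q : Fin n) (hpq : p ≠ q) :
    ∑ i : Fin n, ((Pi.single p 1 - Pi.single q 1 : Fin n → ℤ) i)^2 = 2 := by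
  have hterm : ∀ i : Fin n, ((Pi.single p 1 - Pi.single q 1 : Fin n → ℤ) i)^2
      = (if i = p then 1 else 0) + (if i = q then 1 else 0) := by
    intro i
    simp only [Pi.sub_apply, Pi.single_apply]
    by_cases h1 : i = p <;> by_cases h2 : i = q
    · exact absurd (h1 ▸ h2.symm ▸ rfl) hpq.symm
    all_goals simp [h1, h2, hpq, Ne.symm hpq]
  rw [Finset.sum_congr rfl (fun i _ => hterm i), Finset.sum_add_distrib,
    Finset.sum_ite_eq' Finset.univ p (fun _ => (1:ℤ)),
    Finset.sum_ite_eq' Finset.univ q (fun _ => (1:ℤ))]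
  simp

theorem realRoot_char (hn : 3 ≤ n) {a : Fin n → ℤ} (ha : IsRealRoot a) :
    ∃ p q : Fin n, p ≠ q ∧ finPart a = Pi.single p 1 - Pi.single q 1 := by
  set f := finPart a with hf
  have hf2 : ∑ i : Fin n, (f i)^2 = 2 := by
    rw [← pairing_self hn a]; exact ha
  have hf0 : ∑ i : Fin n, f i = 0 := sum_finPart a
  have hbound : ∀ i, -1 ≤ f i ∧ f i ≤ 1 := by
    intro i
    have hle : (f i)^2 ≤ 2 := by
      rw [← hf2]
      exact Finset.single_le_sum (fun j _ => sq_nonneg (f j)) (Finset.mem_univ i)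
    constructor <;> nlinarith
  have hex_pos : ∃ p, f p = 1 := by
    by_contra hno
    push_neg at hno
    have hallle : ∀ i, f i ≤ 0 := by
      intro i
      have h1 := (hbound i).1; have h2 := (hbound i).2
      have := hno i; omega
    have hsq : ∀ i, (f i)^2 = - f i := by
      intro i
      have h1 := (hbound i).1
      have h2 := hallle i
      interval_cases h : f i <;> norm_num
    rw [Finset.sum_congr rfl (fun i _ => hsq i), Finset.sum_neg_distrib, hf0] at hf2
    norm_num at hf2
  have hex_neg : ∃ q, f q = -1 := by
    by_contra hno
    push_neg at hno
    have hallge : ∀ i, 0 ≤ f i := by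
      intro i
      have h1 := (hbound i).1; have h2 := (hbound i).2
      have := hno i; omega
    have hsq : ∀ i, (f i)^2 = f i := by
      intro i
      have h1 := hallge i
      have h2 := (hbound i).2
      interval_cases h : f i <;> norm_num
    rw [Finset.sum_congr rfl (fun i _ => hsq i), hf0] at hf2
    norm_num at hf2
  obtain ⟨p, hp⟩ := hex_pos
  obtain ⟨q, hq⟩ := hex_neg
  have hpq : p ≠ q := by intro h; rw [h, hq] at hp; norm_num at hp
  refine ⟨p, q, hpq, ?_⟩
  have hrest : ∀ i, i ≠ p → i ≠ q → f i = 0 := by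
    intro i hip hiq
    by_contra hi0
    have hi2 : 1 ≤ (f i)^2 := by
      have h1 := (hbound i).1; have h2 := (hbound i).2
      have : f i = -1 ∨ f i = 1 := by omega
      rcases this with h | h <;> rw [h] <;> norm_num
    have hsplit : ∑ j : Fin n, (f j)^2
        = ∑ j ∈ ((Finset.univ.erase p).erase q), (f j)^2 + (f q)^2 + (f p)^2 := by
      rw [Finset.sum_erase_add _ _ (Finset.mem_erase.mpr ⟨Ne.symm hpq, Finset.mem_univ q⟩),
        Finset.sum_erase_add _ _ (Finset.mem_univ p)]
    have hmem : i ∈ (Finset.univ.erase p).erase q :=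
      Finset.mem_erase.mpr ⟨hiq, Finset.mem_erase.mpr ⟨hip, Finset.mem_univ i⟩⟩
    have hge : 1 ≤ ∑ j ∈ ((Finset.univ.erase p).erase q), (f j)^2 := by
      calc (1:ℤ) ≤ (f i)^2 := hi2
      _ ≤ _ := Finset.single_le_sum (fun j _ => sq_nonneg (f j)) hmem
    rw [hsplit, hp, hq] at hf2
    norm_num at hf2
    omega
  funext i
  simp only [Pi.sub_apply, Pi.single_apply]
  by_cases h1 : i = p
  · subst h1; rw [hp, if_pos rfl, if_neg hpq]; norm_num
  · by_cases h2 : i = q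
    · subst h2; rw [hq, if_neg (fun h => h1 h), if_pos rfl]; norm_num
    · rw [hrest i h1 h2, if_neg h1, if_neg h2]; norm_num

theorem sref_spec (a : Fin n → ℤ) (p q : Fin n) (hpq : p ≠ q)
    (hf : finPart a = Pi.single p 1 - Pi.single q 1) :
    sref a = ⟨Equiv.swap p q, fun i => coeff0 a * finPart a i⟩ := by
  unfold sref
  congr 1
  have hex : ∃ w : Equiv.Perm (Fin n), ∃ p' q' : Fin n,
      finPart a = Pi.single p' 1 - Pi.single q' 1 ∧ w = Equiv.swap p' q' :=
    ⟨Equiv.swap p q, p, q, hf, rfl⟩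
  obtain ⟨p', q', hf', hw⟩ := Classical.epsilon_spec hex
  rw [hw]
  have heq : ∀ i : Fin n, (Pi.single p 1 - Pi.single q 1 : Fin n → ℤ) i
      = (Pi.single p' 1 - Pi.single q' 1 : Fin n → ℤ) i := by
    intro i; rw [← hf, ← hf']
  have hp'q' : p' ≠ q' := by
    intro h
    have := heq p
    rw [h] at this
    simp only [Pi.sub_apply, Pi.single_apply, if_pos rfl, if_neg hpq] at this
    simp at this
  have hpp' : p' = p := by
    have := heq p'
    simp only [Pi.sub_apply, Pi.single_apply, if_pos rfl, if_neg hp'q'] at this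
    by_cases h1 : p' = p
    · exact h1
    · by_cases h2 : p' = q <;> simp [h1, h2, Ne.symm hpq] at this
  have hqq' : q' = q := by
    have := heq q'
    simp only [Pi.sub_apply, Pi.single_apply, if_neg (Ne.symm hp'q'), if_pos rfl] at this
    by_cases h1 : q' = q
    · exact h1
    · by_cases h2 : q' = p <;> simp [h1, h2, hpq] at this
  rw [hpp', hqq']

/-- the root with support the interval `(p, q]` -/
def rt (p q : Fin n) : Fin n → ℤ := fun j => if p.val < j.val ∧ j.val ≤ q.val then 1 else 0

theorem finPart_rt {p q : Fin n} (hpq : p.val < q.val) :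
    finPart (rt p q) = Pi.single p 1 - Pi.single q 1 := by
  have hq := q.isLt
  have hp := p.isLt
  funext j
  have hj := j.isLt
  show rt p q (fsucc j) - rt p q j = _
  simp only [rt, Pi.sub_apply, Pi.single_apply, Fin.ext_iff, fsucc_val]
  split_ifs <;> omega

theorem isPosRoot_rt (hn : 3 ≤ n) {p q : Fin n} (hpq : p.val < q.val) :
    IsPosRoot (rt p q) := by
  constructor
  · show pairing _ _ = 2
    rw [pairing_self hn, finPart_rt hpq]
    exact single_sub_single_sq_sum p q (fun h => by rw [h] at hpq; omega)
  · intro i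
    unfold rt
    split_ifs <;> norm_num

theorem sref_rt (hn : 3 ≤ n) {p q : Fin n} (hpq : p.val < q.val) :
    sref (rt p q) = ⟨Equiv.swap p q, 0⟩ := by
  rw [sref_spec (rt p q) p q (fun h => by rw [h] at hpq; omega) (finPart_rt hpq)]
  congr 1
  funext i
  have h0 : coeff0 (rt p q) = 0 := by
    rw [coeff0_eq (by omega)]
    unfold rt
    rw [if_neg (by simp)]
  rw [h0]
  simp

end Aff
end AffA

namespace AffA
namespace Aff

variable {n : ℕ}

theorem posRoot_interval (hn : 3 ≤ n) {b : Fin n → ℤ} (hb : IsPosRoot b)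
    (h0 : b ⟨0, by omega⟩ = 0) :
    ∃ p q : Fin n, p.val < q.val ∧ b = rt p q := by
  obtain ⟨p, q, hpq, hf⟩ := realRoot_char hn hb.1
  have tele : ∀ m : ℕ, ∀ hm : m < n, b ⟨m, hm⟩
      = (if p.val < m then 1 else 0) - (if q.val < m then 1 else 0) := by
    intro m
    induction m with
    | zero =>
      intro hm
      rw [h0]
      simp
    | succ m ih =>
      intro hm
      have hm' : m < n := by omega
      have hfs : fsucc ⟨m, hm'⟩ = ⟨m + 1, hm⟩ := by
        apply Fin.ext
        rw [fsucc_val]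
        show (if m = n - 1 then 0 else m + 1) = m + 1
        split_ifs <;> omega
      have hstep : b ⟨m + 1, hm⟩ = b ⟨m, hm'⟩ + finPart b ⟨m, hm'⟩ := by
        show _ = b _ + (b (fsucc _) - b _)
        rw [hfs]; ring
      rw [hstep, ih hm', hf]
      simp only [Pi.sub_apply, Pi.single_apply, Fin.ext_iff]
      have hp := p.isLt
      have hq := q.isLt
      split_ifs <;> omega
  have hqp : p.val < q.val := by
    rcases Nat.lt_trichotomy p.val q.val with h | h | h
    · exact h
    · exact absurd (Fin.ext h) hpq
    · exfalso
      have ht := tele p.val p.isLt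
      have hnn := hb.2 ⟨p.val, p.isLt⟩
      rw [ht] at hnn
      split_ifs at hnn <;> omega
  refine ⟨p, q, hqp, ?_⟩
  funext j
  have ht := tele j.val j.isLt
  have hj : (⟨j.val, j.isLt⟩ : Fin n) = j := Fin.ext rfl
  rw [hj] at ht
  rw [ht]
  show _ = if p.val < j.val ∧ j.val ≤ q.val then (1:ℤ) else 0
  split_ifs <;> omega

/-! ### inversion counts -/

/-- number of inversions -/
def II (σ : Equiv.Perm (Fin n)) : ℕ :=
  ∑ p : Fin n, ∑ q : Fin n, if p < q ∧ σ q < σ p then 1 else 0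

theorem len_mk (σ : Equiv.Perm (Fin n)) : len (⟨σ, 0⟩ : Aff n) = II σ := by
  unfold len II
  apply Finset.sum_congr rfl; intro p _
  apply Finset.sum_congr rfl; intro q _
  show (if p < q then ((if σ q < σ p then (1:ℤ) else 0)
    + ((0 : Fin n → ℤ) p - (0 : Fin n → ℤ) q)).natAbs else 0) = _
  simp only [Pi.zero_apply, sub_zero, add_zero]
  by_cases h1 : p < q <;> by_cases h2 : σ q < σ p <;> simp [h1, h2]

theorem sum_split_two (f : Fin n → ℕ) (u v : Fin n) (huv : u ≠ v) :
    ∑ x : Fin n, f x = ∑ x ∈ (Finset.univ.erase u).erase v, f x + f v + f u := by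
  rw [Finset.sum_erase_add (Finset.univ.erase u) f
      (Finset.mem_erase.mpr ⟨Ne.symm huv, Finset.mem_univ v⟩),
    Finset.sum_erase_add Finset.univ f (Finset.mem_univ u)]

set_option maxHeartbeats 1000000 in
theorem II_mul_swap (σ : Equiv.Perm (Fin n)) (a b : Fin n) (hab : a < b) (hσ : σ a < σ b) :
    II σ + 1 ≤ II (σ * Equiv.swap a b) := by
  classical
  have hne : a ≠ b := ne_of_lt hab
  set τ := Equiv.swap a b with hτdef
  have hd_split : ∀ ρ : Equiv.Perm (Fin n),
      (∑ p : Fin n, ∑ q : Fin n,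
        if (p < q ∧ ρ q < ρ p) ∨ (q < p ∧ ρ p < ρ q) then (1:ℕ) else 0)
      = 2 * II ρ := by
    intro ρ
    have hsplit : ∀ p q : Fin n,
        (if (p < q ∧ ρ q < ρ p) ∨ (q < p ∧ ρ p < ρ q) then (1:ℕ) else 0)
        = (if p < q ∧ ρ q < ρ p then 1 else 0) + (if q < p ∧ ρ p < ρ q then 1 else 0) := by
      intro p q
      by_cases h1 : p < q ∧ ρ q < ρ p <;> by_cases h2 : q < p ∧ ρ p < ρ q
      · exact absurd (lt_trans h1.1 h2.1) (lt_irrefl p)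
      all_goals simp [h1, h2]
    rw [Finset.sum_congr rfl (fun p _ => Finset.sum_congr rfl (fun q _ => hsplit p q))]
    rw [Finset.sum_congr rfl (fun p (_ : p ∈ Finset.univ) => Finset.sum_add_distrib),
      Finset.sum_add_distrib]
    have h2 : (∑ p : Fin n, ∑ q : Fin n, if q < p ∧ ρ p < ρ q then (1:ℕ) else 0) = II ρ := by
      rw [Finset.sum_comm]
      rfl
    rw [h2]
    unfold II
    ring
  -- pointwise terms
  set K : Fin n → Fin n → ℕ :=
    fun p q => if (p < q ∧ σ q < σ p) ∨ (q < p ∧ σ p < σ q) then 1 else 0 with hK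
  set K' : Fin n → Fin n → ℕ :=
    fun p q => if (τ p < τ q ∧ σ q < σ p) ∨ (τ q < τ p ∧ σ p < σ q) then 1 else 0 with hK'
  have e1 : τ a = b := Equiv.swap_apply_left a b
  have e2 : τ b = a := Equiv.swap_apply_right a b
  have hab' : a.val < b.val := hab
  have hσ' : (σ a).val < (σ b).val := hσ
  have hvne : ∀ x y : Fin n, x ≠ y → (σ x).val ≠ (σ y).val := by
    intro x y h hv
    exact h (σ.injective (Fin.ext hv))
  -- reindexed identity
  have hre : (∑ p : Fin n, ∑ q : Fin n, K' p q) = 2 * II (σ * τ) := by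
    rw [← hd_split (σ * τ)]
    have step1 : ∀ p q : Fin n, K' p q
        = (if (τ p < τ q ∧ (σ * τ) (τ q) < (σ * τ) (τ p))
            ∨ (τ q < τ p ∧ (σ * τ) (τ p) < (σ * τ) (τ q)) then (1:ℕ) else 0) := by
      intro p q
      simp only [hK', hτdef, Equiv.Perm.mul_apply, Equiv.swap_apply_self]
    rw [Finset.sum_congr rfl (fun p _ => Finset.sum_congr rfl (fun q _ => step1 p q))]
    rw [Finset.sum_congr rfl (fun p (_ : p ∈ Finset.univ) => Equiv.sum_comp τ
      (fun q => if (τ p < q ∧ (σ * τ) q < (σ * τ) (τ p))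
        ∨ (q < τ p ∧ (σ * τ) (τ p) < (σ * τ) q) then (1:ℕ) else 0))]
    exact Equiv.sum_comp τ (fun p => ∑ q : Fin n,
      if (p < q ∧ (σ * τ) q < (σ * τ) p) ∨ (q < p ∧ (σ * τ) p < (σ * τ) q) then (1:ℕ) else 0)
  -- comparisons
  have hKK' : ∀ p q : Fin n, p ≠ a → p ≠ b → q ≠ a → q ≠ b → K p q = K' p q := by
    intro p q h1 h2 h3 h4
    simp only [hK, hK', hτdef, Equiv.swap_apply_of_ne_of_ne h1 h2, Equiv.swap_apply_of_ne_of_ne h3 h4]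
  have hrow : ∀ q : Fin n, q ≠ a → q ≠ b → K a q + K b q ≤ K' a q + K' b q := by
    intro q hqa hqb
    have e3 : τ q = q := Equiv.swap_apply_of_ne_of_ne hqa hqb
    have v1 := hvne q a hqa
    have v2 := hvne q b hqb
    simp only [hK, hK', e1, e2, e3, Fin.lt_def]
    split_ifs <;> omega
  have hcol : ∀ p : Fin n, p ≠ a → p ≠ b → K p a + K p b ≤ K' p a + K' p b := by
    intro p hpa hpb
    have e3 : τ p = p := Equiv.swap_apply_of_ne_of_ne hpa hpb
    have v1 := hvne p a hpa
    have v2 := hvne p b hpb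
    simp only [hK, hK', e1, e2, e3, Fin.lt_def]
    split_ifs <;> omega
  have f1 : ¬ σ b < σ a := not_lt.mpr (le_of_lt hσ)
  have f2 : ¬ b < a := not_lt.mpr (le_of_lt hab)
  have hcorner : K a a + K a b + (K b a + K b b) + 2
      ≤ K' a a + K' a b + (K' b a + K' b b) := by
    have c1 : K a a = 0 := by simp [hK, lt_irrefl]
    have c2 : K b b = 0 := by simp [hK, lt_irrefl]
    have c3 : K' a a = 0 := by simp [hK', e1, lt_irrefl]
    have c4 : K a b = 0 := by simp [hK, f1, f2]
    have c5 : K b a = 0 := by simp [hK, f1, f2]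
    have c6 : K' a b = 1 := by simp [hK', e1, e2, hab, hσ]
    have c7 : K' b a = 1 := by simp [hK', e1, e2, hab, hσ]
    have c8 : K' b b = 0 := by simp [hK', e2, lt_irrefl]
    omega
  -- assembling
  have hmain : (∑ p : Fin n, ∑ q : Fin n, K p q) + 2 ≤ ∑ p : Fin n, ∑ q : Fin n, K' p q := by
    rw [sum_split_two (fun p => ∑ q : Fin n, K p q) a b hne,
      sum_split_two (fun p => ∑ q : Fin n, K' p q) a b hne]
    have hinner : ∀ p : Fin n, p ≠ a → p ≠ b → ∑ q : Fin n, K p q ≤ ∑ q : Fin n, K' p q := by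
      intro p hpa hpb
      rw [sum_split_two (K p) a b hne, sum_split_two (K' p) a b hne]
      have hmid : ∑ q ∈ (Finset.univ.erase a).erase b, K p q = ∑ q ∈ (Finset.univ.erase a).erase b, K' p q := by
        apply Finset.sum_congr rfl
        intro q hq
        have hq' := Finset.mem_erase.mp hq
        have hq'' := Finset.mem_erase.mp hq'.2
        exact hKK' p q hpa hpb hq''.1 hq'.1
      have := hcol p hpa hpb
      omega
    have hsums : ∑ p ∈ (Finset.univ.erase a).erase b, (∑ q : Fin n, K p q)
        ≤ ∑ p ∈ (Finset.univ.erase a).erase b, (∑ q : Fin n, K' p q) := by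
      apply Finset.sum_le_sum
      intro p hp
      have hp' := Finset.mem_erase.mp hp
      have hp'' := Finset.mem_erase.mp hp'.2
      exact hinner p hp''.1 hp'.1
    have hrowsum : (∑ q : Fin n, K b q) + (∑ q : Fin n, K a q) + 2
        ≤ (∑ q : Fin n, K' b q) + (∑ q : Fin n, K' a q) := by
      rw [sum_split_two (K b) a b hne, sum_split_two (K a) a b hne,
        sum_split_two (K' b) a b hne, sum_split_two (K' a) a b hne]
      have hmid : ∑ q ∈ (Finset.univ.erase a).erase b, (K b q + K a q) ≤ ∑ q ∈ (Finset.univ.erase a).erase b, (K' b q + K' a q) := by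
        apply Finset.sum_le_sum
        intro q hq
        have hq' := Finset.mem_erase.mp hq
        have hq'' := Finset.mem_erase.mp hq'.2
        have := hrow q hq''.1 hq'.1
        omega
      rw [Finset.sum_add_distrib] at hmid
      rw [show ∑ q ∈ (Finset.univ.erase a).erase b, (K' b q + K' a q) = ∑ q ∈ (Finset.univ.erase a).erase b, K' b q + ∑ q ∈ (Finset.univ.erase a).erase b, K' a q from
        Finset.sum_add_distrib] at hmid
      have := hcorner
      omega
    omega
  have d1 : (∑ p : Fin n, ∑ q : Fin n, K p q) = 2 * II σ := hd_split σ
  omega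

theorem mul_w (x y : Aff n) : (x * y).w = x.w * y.w := rfl
theorem mul_t (x y : Aff n) : (x * y).t = fun i => x.t (y.w i) + y.t i := rfl
theorem one_w : (1 : Aff n).w = 1 := rfl
theorem one_t : (1 : Aff n).t = 0 := rfl
theorem inv_w (x : Aff n) : (x⁻¹).w = x.w⁻¹ := rfl

theorem mk_mul_mk (σ ρ : Equiv.Perm (Fin n)) :
    (⟨σ, 0⟩ : Aff n) * ⟨ρ, 0⟩ = ⟨σ * ρ, 0⟩ := by
  apply Aff.ext
  · rfl
  · funext i
    show (0 : Fin n → ℤ) (ρ i) + (0 : Fin n → ℤ) i = (0 : Fin n → ℤ) i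
    simp

theorem bstep_swap (hn : 3 ≤ n) (σ : Equiv.Perm (Fin n)) {p q : Fin n} (hpq : p.val < q.val)
    (hσ : σ p < σ q) : bstep (⟨σ, 0⟩ : Aff n) ⟨σ * Equiv.swap p q, 0⟩ := by
  constructor
  · refine ⟨rt p q, isPosRoot_rt hn hpq, ?_⟩
    rw [sref_rt hn hpq, mk_mul_mk]
  · rw [len_mk, len_mk]
    have := II_mul_swap σ p q (Fin.lt_def.mpr hpq) hσ
    omega

end Aff
end AffA

namespace AffA
namespace Aff

variable {n : ℕ}

open Finset

/-- crossing number at line `j` -/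
def cr (σ : Equiv.Perm (Fin n)) (j : Fin n) : ℕ :=
  (univ.filter fun a => a ≤ j ∧ j < σ a).card

theorem cr_one (j : Fin n) : cr (1 : Equiv.Perm (Fin n)) j = 0 := by
  unfold cr
  rw [Finset.card_eq_zero]
  ext x
  simp only [mem_filter, mem_univ, true_and, Finset.notMem_empty, iff_false, not_and,
    Equiv.Perm.one_apply, Finset.mem_coe, Set.mem_setOf_eq]
  intro h1
  exact not_lt.mpr (Finset.mem_filter.mp h1).2.1 (Finset.mem_filter.mp h1).2.2

theorem cr_mul_le (σ τ : Equiv.Perm (Fin n)) (j : Fin n) :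
    cr (σ * τ) j ≤ cr σ j + cr τ j := by
  classical
  have hsplit := Finset.card_filter_add_card_filter_not
    (s := univ.filter fun a : Fin n => a ≤ j ∧ j < (σ * τ) a) (p := fun a => j < τ a)
  have h1 : ((univ.filter fun a : Fin n => a ≤ j ∧ j < (σ * τ) a).filter
      fun a => j < τ a).card ≤ cr τ j := by
    apply Finset.card_le_card
    intro x hx
    simp only [mem_filter, mem_univ, true_and] at hx ⊢
    exact ⟨hx.1.1, hx.2⟩
  have h2 : ((univ.filter fun a : Fin n => a ≤ j ∧ j < (σ * τ) a).filter
      fun a => ¬ j < τ a).card ≤ cr σ j := by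
    apply Finset.card_le_card_of_injOn τ
    · intro x hx
      simp only [mem_filter, mem_univ, true_and, Finset.mem_coe] at hx ⊢
      refine ⟨not_lt.mp hx.2, ?_⟩
      have := hx.1.2
      rwa [Equiv.Perm.mul_apply] at this
    · intro x _ y _ h
      exact τ.injective h
  unfold cr at h1 h2 ⊢
  omega

theorem cr_down (σ : Equiv.Perm (Fin n)) (j : Fin n) :
    cr σ j = (univ.filter fun a => j < a ∧ σ a ≤ j).card := by
  classical
  have hIic : (univ.filter fun a : Fin n => a ≤ j) = Finset.Iic j := by
    ext x; simp [Finset.mem_Iic]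
  have hcardA : (univ.filter fun a : Fin n => a ≤ j).card = j.val + 1 := by
    rw [hIic, Fin.card_Iic]
  have hcardB : (univ.filter fun a : Fin n => σ a ≤ j).card = j.val + 1 := by
    rw [← hcardA]
    apply Finset.card_bij (fun a _ => σ a)
    · intro a ha
      simp only [mem_filter, mem_univ, true_and] at ha ⊢
      exact ha
    · intro a _ b _ h
      exact σ.injective h
    · intro b hb
      simp only [mem_filter, mem_univ, true_and] at hb
      exact ⟨σ⁻¹ b, by simp [hb], by simp⟩
  have e1 := Finset.card_filter_add_card_filter_not
    (s := univ.filter fun a : Fin n => a ≤ j) (p := fun a => j < σ a)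
  have e2 := Finset.card_filter_add_card_filter_not
    (s := univ.filter fun a : Fin n => σ a ≤ j) (p := fun a => j < a)
  rw [Finset.filter_filter, Finset.filter_filter] at e1
  rw [Finset.filter_filter, Finset.filter_filter] at e2
  have q1 : (univ.filter fun a : Fin n => a ≤ j ∧ j < σ a)
      = univ.filter fun a : Fin n => a ≤ j ∧ j < σ a := rfl
  have q2 : (univ.filter fun a : Fin n => a ≤ j ∧ ¬ j < σ a)
      = univ.filter fun a : Fin n => a ≤ j ∧ σ a ≤ j := by
    apply Finset.filter_congr
    intro x _
    simp [not_lt]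
  have q3 : (univ.filter fun a : Fin n => σ a ≤ j ∧ j < a)
      = univ.filter fun a : Fin n => j < a ∧ σ a ≤ j := by
    apply Finset.filter_congr
    intro x _
    constructor <;> (intro h; exact ⟨h.2, h.1⟩)
  have q4 : (univ.filter fun a : Fin n => σ a ≤ j ∧ ¬ j < a)
      = univ.filter fun a : Fin n => a ≤ j ∧ σ a ≤ j := by
    apply Finset.filter_congr
    intro x _
    simp only [not_lt]
    constructor <;> (intro h; exact ⟨h.2, h.1⟩)
  rw [q2] at e1
  rw [q3, q4] at e2
  unfold cr
  omega

theorem card_filter_eq_two (P P' : Fin n → Prop) [DecidablePred P] [DecidablePred P']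
    (u v : Fin n) (huv : u ≠ v) (hout : ∀ x, x ≠ u → x ≠ v → (P x ↔ P' x))
    (hsum : ((if P u then 1 else 0) + (if P v then 1 else 0) : ℕ)
      = (if P' u then 1 else 0) + (if P' v then 1 else 0)) :
    (univ.filter P).card = (univ.filter P').card := by
  classical
  rw [Finset.card_filter, Finset.card_filter]
  rw [sum_split_two (fun x => if P x then 1 else 0) u v huv,
    sum_split_two (fun x => if P' x then 1 else 0) u v huv]
  have hmid : ∑ x ∈ (univ.erase u).erase v, (if P x then (1:ℕ) else 0)
      = ∑ x ∈ (univ.erase u).erase v, (if P' x then (1:ℕ) else 0) := by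
    apply Finset.sum_congr rfl
    intro x hx
    have hx' := Finset.mem_erase.mp hx
    have hx'' := Finset.mem_erase.mp hx'.2
    rw [if_congr (hout x hx''.1 hx'.1) rfl rfl]
  omega

/-- the set of points moved by a permutation -/
def mov (σ : Equiv.Perm (Fin n)) : Finset (Fin n) := univ.filter fun a => σ a ≠ a

theorem reachB (hn : 3 ≤ n) (P Q : Fin n) (hPQ : P.val < Q.val) :
    ∀ (m : ℕ) (σ : Equiv.Perm (Fin n)), (mov σ).card ≤ m →
    (∀ j : Fin n, cr σ j = if P.val ≤ j.val ∧ j.val < Q.val then 1 else 0) →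
    ble (⟨σ, 0⟩ : Aff n) ⟨Equiv.swap P Q, 0⟩ := by
  intro m
  induction m with
  | zero =>
    intro σ hcard hcr
    exfalso
    have hm : mov σ = ∅ := Finset.card_eq_zero.mp (by omega)
    have hid : σ = 1 := by
      apply Equiv.ext
      intro x
      by_contra h
      rw [Equiv.Perm.one_apply] at h
      have : x ∈ mov σ := by simp [mov, h]
      rw [hm] at this
      exact Finset.notMem_empty x this
    have := hcr P
    rw [hid, cr_one, if_pos ⟨le_refl _, hPQ⟩] at this
    omega
  | succ m ih =>
    intro σ hcard hcr
    by_cases hEq : σ = Equiv.swap P Q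
    · rw [hEq]
      exact Relation.ReflTransGen.refl
    · -- general facts
      have hcrle : ∀ j : Fin n, cr σ j ≤ 1 := fun j => by rw [hcr j]; split_ifs <;> omega
      have hbox : ∀ j a : Fin n, a ≤ j → j < σ a → P.val ≤ j.val ∧ j.val < Q.val := by
        intro j a h1 h2
        by_contra hc
        have h0 : cr σ j = 0 := by rw [hcr j, if_neg hc]
        have hmem : a ∈ univ.filter fun a => a ≤ j ∧ j < σ a := by
          simp only [mem_filter, mem_univ, true_and]; exact ⟨h1, h2⟩
        rw [Finset.card_eq_zero.mp h0] at hmem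
        exact Finset.notMem_empty a hmem
      have hbox' : ∀ j a : Fin n, j < a → σ a ≤ j → P.val ≤ j.val ∧ j.val < Q.val := by
        intro j a h1 h2
        by_contra hc
        have h0 : cr σ j = 0 := by rw [hcr j, if_neg hc]
        rw [cr_down] at h0
        have hmem : a ∈ univ.filter fun a => j < a ∧ σ a ≤ j := by
          simp only [mem_filter, mem_univ, true_and]; exact ⟨h1, h2⟩
        rw [Finset.card_eq_zero.mp h0] at hmem
        exact Finset.notMem_empty a hmem
      have htwo : ∀ j a b : Fin n, a ≠ b → a ≤ j → j < σ a → b ≤ j → j < σ b → False := by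
        intro j a b hab h1 h2 h3 h4
        have hA : a ∈ univ.filter fun x => x ≤ j ∧ j < σ x := by
          simp only [mem_filter, mem_univ, true_and]; exact ⟨h1, h2⟩
        have hB : b ∈ univ.filter fun x => x ≤ j ∧ j < σ x := by
          simp only [mem_filter, mem_univ, true_and]; exact ⟨h3, h4⟩
        have h2le : 2 ≤ cr σ j := by
          have := Finset.one_lt_card.mpr ⟨a, hA, b, hB, hab⟩
          unfold cr
          omega
        have := hcrle j
        omega
      have htwo' : ∀ j a b : Fin n, a ≠ b → j < a → σ a ≤ j → j < b → σ b ≤ j → False := by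
        intro j a b hab h1 h2 h3 h4
        have hA : a ∈ univ.filter fun x => j < x ∧ σ x ≤ j := by
          simp only [mem_filter, mem_univ, true_and]; exact ⟨h1, h2⟩
        have hB : b ∈ univ.filter fun x => j < x ∧ σ x ≤ j := by
          simp only [mem_filter, mem_univ, true_and]; exact ⟨h3, h4⟩
        have h2le : 2 ≤ cr σ j := by
          have := Finset.one_lt_card.mpr ⟨a, hA, b, hB, hab⟩
          rw [cr_down]
          omega
        have := hcrle j
        omega
      -- P moves up
      have hPup : P < σ P := by
        have hpos : 0 < cr σ P := by
          rw [hcr P, if_pos ⟨le_refl _, hPQ⟩]; omega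
        obtain ⟨a0, ha0⟩ := Finset.card_pos.mp hpos
        simp only [mem_filter, mem_univ, true_and] at ha0
        have ha0P : a0 = P := by
          by_contra hne'
          have hlt : a0.val < P.val :=
            lt_of_le_of_ne (Fin.le_def.mp ha0.1) (fun h => hne' (Fin.ext h))
          have hb := hbox a0 a0 (le_refl _) (lt_of_le_of_lt ha0.1 ha0.2)
          omega
        rw [ha0P] at ha0
        exact ha0.2
      by_cases hvQ : σ P = Q
      · -- case σ P = Q : merge at the top
        have hQne : σ Q ≠ Q := by
          intro h
          have : P = Q := σ.injective (by rw [hvQ, h])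
          have := congrArg Fin.val this
          omega
        have hQlt : σ Q < Q := by
          rcases lt_or_gt_of_ne hQne with h | h
          · exact h
          · exfalso
            have hb := hbox Q Q (le_refl _) h
            omega
        have hdP : σ Q ≠ P := by
          intro hdp
          obtain ⟨c, hc⟩ : ∃ c, σ c ≠ Equiv.swap P Q c := by
            by_contra hall
            push_neg at hall
            exact hEq (Equiv.ext hall)
          have hcP : c ≠ P := by
            intro h; subst h
            rw [Equiv.swap_apply_left] at hc
            exact hc hvQ
          have hcQ : c ≠ Q := by
            intro h; subst h
            rw [Equiv.swap_apply_right] at hc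
            exact hc hdp
          have hcm : σ c ≠ c := by
            rw [Equiv.swap_apply_of_ne_of_ne hcP hcQ] at hc
            exact hc
          rcases lt_or_gt_of_ne hcm with hlt | hgt
          · have hb := hbox' (σ c) c hlt (le_refl _)
            refine htwo' (σ c) c Q (fun h => hcQ h) hlt (le_refl _) ?_ ?_
            · exact Fin.lt_def.mpr (by omega)
            · rw [hdp]
              exact Fin.le_def.mpr hb.1
          · have hb := hbox c c (le_refl _) hgt
            refine htwo c c P hcP (le_refl _) hgt (Fin.le_def.mpr hb.1) ?_
            rw [hvQ]
            exact Fin.lt_def.mpr hb.2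
        have hdown : σ (σ Q) < σ Q := by
          have hne1 : σ (σ Q) ≠ σ Q := by
            intro h
            have : σ Q = Q := σ.injective h
            exact hQne this
          rcases lt_or_gt_of_ne hne1 with h | h
          · exact h
          · exfalso
            have hb := hbox (σ Q) (σ Q) (le_refl _) h
            refine htwo (σ Q) (σ Q) P hdP (le_refl _) h (Fin.le_def.mpr hb.1) ?_
            rw [hvQ]
            exact Fin.lt_def.mpr hQlt
        -- the step on the pair (σ Q, Q)
        have hstep := bstep_swap hn σ (p := σ Q) (q := Q) hQlt hdown
        set σ' := σ * Equiv.swap (σ Q) Q with hσ'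
        have hs1 : σ' (σ Q) = σ Q := by
          rw [hσ', Equiv.Perm.mul_apply, Equiv.swap_apply_left]
        have hs2 : σ' Q = σ (σ Q) := by
          rw [hσ', Equiv.Perm.mul_apply, Equiv.swap_apply_right]
        have hswd : ∀ x : Fin n, x ≠ σ Q → x ≠ Q → σ' x = σ x := by
          intro x h1 h2
          rw [hσ', Equiv.Perm.mul_apply, Equiv.swap_apply_of_ne_of_ne h1 h2]
        have hcr' : ∀ j : Fin n, cr σ' j = if P.val ≤ j.val ∧ j.val < Q.val then 1 else 0 := by
          intro j
          rw [← hcr j]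
          show _ = cr σ j
          unfold cr
          apply card_filter_eq_two _ _ (σ Q) Q (ne_of_lt hQlt)
          · intro x h1 h2
            rw [hswd x h1 h2]
          · rw [hs1, hs2]
            have f1 : (σ (σ Q)).val < (σ Q).val := hdown
            have f2 : (σ Q).val < Q.val := hQlt
            simp only [Fin.le_def, Fin.lt_def]
            split_ifs <;> omega
        have hmov : (mov σ').card ≤ m := by
          have hdm : σ Q ∈ mov σ := by
            simp only [mov, mem_filter, mem_univ, true_and]
            intro h
            have := congrArg Fin.val h
            have f1 : (σ (σ Q)).val < (σ Q).val := hdown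
            omega
          have hsub : mov σ' ⊆ (mov σ).erase (σ Q) := by
            intro x hx
            simp only [mov, mem_filter, mem_univ, true_and] at hx
            have hxd : x ≠ σ Q := fun h => hx (by rw [h, hs1])
            refine Finset.mem_erase.mpr ⟨hxd, ?_⟩
            simp only [mov, mem_filter, mem_univ, true_and]
            by_cases hxQ : x = Q
            · rw [hxQ]
              intro h
              exact hQne h
            · intro h
              apply hx
              rw [hswd x hxd hxQ]
              exact h
          have h1 := Finset.card_le_card hsub
          rw [Finset.card_erase_of_mem hdm] at h1
          have h2 : 0 < (mov σ).card := Finset.card_pos.mpr ⟨σ Q, hdm⟩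
          omega
        exact Relation.ReflTransGen.head hstep (ih σ' hmov hcr')
      · -- case σ P ≠ Q
        have hvP : P.val < (σ P).val := hPup
        have hvQ' : (σ P).val < Q.val := by
          rcases Nat.lt_trichotomy (σ P).val Q.val with h | h | h
          · exact h
          · exact absurd (Fin.ext h) hvQ
          · exfalso
            have hb := hbox Q P (Fin.le_def.mpr (le_of_lt hPQ)) (Fin.lt_def.mpr h)
            omega
        rcases lt_trichotomy (σ (σ P)) (σ P) with hlt | heq | hgt
        · -- impossible
          exfalso
          have h1 : 0 < cr σ (σ P) := by
            rw [hcr (σ P), if_pos ⟨by omega, hvQ'⟩]; omega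
          obtain ⟨a, ha⟩ := Finset.card_pos.mp h1
          simp only [mem_filter, mem_univ, true_and] at ha
          have hav : a ≠ σ P := by
            intro h
            rw [h] at ha
            exact absurd ha.2 (not_lt.mpr (le_of_lt hlt))
          have haP : a ≠ P := by
            intro h
            rw [h] at ha
            exact absurd ha.2 (lt_irrefl _)
          have halt : a.val < (σ P).val :=
            lt_of_le_of_ne (Fin.le_def.mp ha.1) (fun h => hav (Fin.ext h))
          have haup : a < σ a := lt_of_le_of_lt ha.1 ha.2
          have hb := hbox a a (le_refl _) haup
          exact htwo a a P haP (le_refl _) haup (Fin.le_def.mpr hb.1) (Fin.lt_def.mpr halt)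
        · -- fixed point: impossible
          exfalso
          have : P = σ P := σ.injective (by rw [heq])
          have := congrArg Fin.val this
          omega
        · -- up-up step on the pair (P, σ P)
          have hstep := bstep_swap hn σ (p := P) (q := σ P) hvP hgt
          set σ' := σ * Equiv.swap P (σ P) with hσ'
          have hs1 : σ' P = σ (σ P) := by
            rw [hσ', Equiv.Perm.mul_apply, Equiv.swap_apply_left]
          have hs2 : σ' (σ P) = σ P := by
            rw [hσ', Equiv.Perm.mul_apply, Equiv.swap_apply_right]
          have hswd : ∀ x : Fin n, x ≠ P → x ≠ σ P → σ' x = σ x := by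
            intro x h1 h2
            rw [hσ', Equiv.Perm.mul_apply, Equiv.swap_apply_of_ne_of_ne h1 h2]
          have hcr' : ∀ j : Fin n, cr σ' j = if P.val ≤ j.val ∧ j.val < Q.val then 1 else 0 := by
            intro j
            rw [← hcr j]
            show _ = cr σ j
            unfold cr
            apply card_filter_eq_two _ _ P (σ P) (ne_of_lt hPup)
            · intro x h1 h2
              rw [hswd x h1 h2]
            · rw [hs1, hs2]
              have f1 : (σ P).val < (σ (σ P)).val := hgt
              simp only [Fin.le_def, Fin.lt_def]
              split_ifs <;> omega
          have hmov : (mov σ').card ≤ m := by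
            have hdm : σ P ∈ mov σ := by
              simp only [mov, mem_filter, mem_univ, true_and]
              intro h
              have := congrArg Fin.val h
              have f1 : (σ P).val < (σ (σ P)).val := hgt
              omega
            have hsub : mov σ' ⊆ (mov σ).erase (σ P) := by
              intro x hx
              simp only [mov, mem_filter, mem_univ, true_and] at hx
              have hxd : x ≠ σ P := fun h => hx (by rw [h, hs2])
              refine Finset.mem_erase.mpr ⟨hxd, ?_⟩
              simp only [mov, mem_filter, mem_univ, true_and]
              by_cases hxP : x = P
              · rw [hxP]
                intro h
                have := congrArg Fin.val h
                omega
              · intro h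
                apply hx
                rw [hswd x hxP hxd]
                exact h
            have h1 := Finset.card_le_card hsub
            rw [Finset.card_erase_of_mem hdm] at h1
            have h2 : 0 < (mov σ).card := Finset.card_pos.mpr ⟨σ P, hdm⟩
            omega
          exact Relation.ReflTransGen.head hstep (ih σ' hmov hcr')

end Aff
end AffA

namespace AffA
namespace Aff

variable {n : ℕ}

open Finset

theorem cr_swap {p q : Fin n} (hpq : p.val < q.val) (j : Fin n) :
    cr (Equiv.swap p q) j = if p.val ≤ j.val ∧ j.val < q.val then 1 else 0 := by
  unfold cr
  by_cases h : p.val ≤ j.val ∧ j.val < q.val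
  · rw [if_pos h]
    have hset : (univ.filter fun a : Fin n => a ≤ j ∧ j < Equiv.swap p q a) = {p} := by
      ext x
      simp only [mem_filter, mem_univ, true_and, Finset.mem_singleton]
      constructor
      · rintro ⟨h1, h2⟩
        by_cases hxp : x = p
        · exact hxp
        · exfalso
          by_cases hxq : x = q
          · subst hxq
            rw [Equiv.swap_apply_right] at h2
            have g1 := Fin.le_def.mp h1
            have g2 := Fin.lt_def.mp h2
            omega
          · rw [Equiv.swap_apply_of_ne_of_ne hxp hxq] at h2
            exact absurd h2 (not_lt.mpr h1)
      · rintro rfl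
        rw [Equiv.swap_apply_left]
        exact ⟨Fin.le_def.mpr h.1, Fin.lt_def.mpr h.2⟩
    rw [hset, Finset.card_singleton]
  · rw [if_neg h, Finset.card_eq_zero]
    ext x
    simp only [mem_filter, mem_univ, true_and, Finset.notMem_empty, iff_false, not_and]
    intro h1 h2
    by_cases hxp : x = p
    · subst hxp
      rw [Equiv.swap_apply_left] at h2
      exact h ⟨Fin.le_def.mp h1, Fin.lt_def.mp h2⟩
    · by_cases hxq : x = q
      · subst hxq
        rw [Equiv.swap_apply_right] at h2
        have g1 := Fin.le_def.mp h1
        have g2 := Fin.lt_def.mp h2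
        omega
      · rw [Equiv.swap_apply_of_ne_of_ne hxp hxq] at h2
        exact absurd h2 (not_lt.mpr h1)

theorem reachA (hn : 3 ≤ n) (P Q : Fin n) (hPQ : P.val < Q.val) :
    ∀ (k : ℕ) (σ : Equiv.Perm (Fin n)),
    (∀ j : Fin n, cr σ j ≤ if P.val ≤ j.val ∧ j.val < Q.val then 1 else 0) →
    (∑ j : Fin n, ((if P.val ≤ j.val ∧ j.val < Q.val then 1 else 0) - cr σ j)) ≤ k →
    ble (⟨σ, 0⟩ : Aff n) ⟨Equiv.swap P Q, 0⟩ := by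
  intro k
  induction k with
  | zero =>
    intro σ hle hsum
    have hz := Finset.sum_eq_zero_iff.mp (Nat.le_zero.mp hsum)
    have hcr : ∀ j : Fin n, cr σ j = if P.val ≤ j.val ∧ j.val < Q.val then 1 else 0 := by
      intro j
      have h1 := hle j
      have h2 := hz j (mem_univ j)
      omega
    exact reachB hn P Q hPQ (mov σ).card σ (le_refl _) hcr
  | succ k ih =>
    intro σ hle hsum
    by_cases hgap : ∃ j : Fin n,
        cr σ j < (if P.val ≤ j.val ∧ j.val < Q.val then 1 else 0)
    · obtain ⟨j0, hj0⟩ := hgap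
      have hbox0 : P.val ≤ j0.val ∧ j0.val < Q.val := by
        by_contra hc
        rw [if_neg hc] at hj0
        omega
      have hcr0 : cr σ j0 = 0 := by
        have := hj0
        rw [if_pos hbox0] at this
        omega
      have hempty : ∀ a : Fin n, ¬ (a ≤ j0 ∧ j0 < σ a) := by
        intro a ha
        have hmem : a ∈ univ.filter fun x : Fin n => x ≤ j0 ∧ j0 < σ x := by
          simp only [mem_filter, mem_univ, true_and]
          exact ha
        rw [Finset.card_eq_zero.mp hcr0] at hmem
        exact Finset.notMem_empty a hmem
      have hj0n : j0.val + 1 < n := by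
        have := Q.isLt
        omega
      set j1 : Fin n := ⟨j0.val + 1, hj0n⟩ with hj1
      have hσj0 : σ j0 ≤ j0 := not_lt.mp (fun h => hempty j0 ⟨le_refl _, h⟩)
      have hσj1 : j0 < σ j1 := by
        by_contra hc
        push_neg at hc
        have himg : ∀ a : Fin n, a ≤ j0 → σ a ≤ j0 :=
          fun a ha => not_lt.mp (fun h => hempty a ⟨ha, h⟩)
        have hsub : (univ.filter fun a : Fin n => a ≤ j0).image σ
            ⊆ univ.filter fun a : Fin n => a ≤ j0 := by
          intro x hx
          obtain ⟨a, ha, rfl⟩ := Finset.mem_image.mp hx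
          simp only [mem_filter, mem_univ, true_and] at ha ⊢
          exact himg a ha
        have hcards : ((univ.filter fun a : Fin n => a ≤ j0).image σ).card
            = (univ.filter fun a : Fin n => a ≤ j0).card :=
          Finset.card_image_of_injective _ σ.injective
        have heq := Finset.eq_of_subset_of_card_le hsub (le_of_eq hcards.symm)
        have hmem : σ j1 ∈ (univ.filter fun a : Fin n => a ≤ j0) := by
          simp only [mem_filter, mem_univ, true_and]
          exact hc
        rw [← heq] at hmem
        obtain ⟨a, ha, haeq⟩ := Finset.mem_image.mp hmem
        have haj1 : a = j1 := σ.injective haeq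
        subst haj1
        simp only [mem_filter, mem_univ, true_and] at ha
        have := Fin.le_def.mp ha
        simp only [hj1] at this
        omega
      have hstep := bstep_swap hn σ (p := j0) (q := j1)
        (show j0.val < j1.val from Nat.lt_succ_self _)
        (lt_of_le_of_lt hσj0 hσj1)
      set σ' := σ * Equiv.swap j0 j1 with hσ'
      have hs1 : σ' j0 = σ j1 := by
        rw [hσ', Equiv.Perm.mul_apply, Equiv.swap_apply_left]
      have hs2 : σ' j1 = σ j0 := by
        rw [hσ', Equiv.Perm.mul_apply, Equiv.swap_apply_right]
      have hswd : ∀ x : Fin n, x ≠ j0 → x ≠ j1 → σ' x = σ x := by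
        intro x h1 h2
        rw [hσ', Equiv.Perm.mul_apply, Equiv.swap_apply_of_ne_of_ne h1 h2]
      have hj0j1 : j0 ≠ j1 := by
        intro h
        have := congrArg Fin.val h
        simp only [hj1] at this
        omega
      have hcr'eq : ∀ j : Fin n, j ≠ j0 → cr σ' j = cr σ j := by
        intro j hj
        unfold cr
        apply card_filter_eq_two _ _ j0 j1 hj0j1
        · intro x h1 h2
          rw [hswd x h1 h2]
        · rw [hs1, hs2]
          have f1 : (σ j0).val ≤ j0.val := Fin.le_def.mp hσj0
          have f2 : j0.val < (σ j1).val := Fin.lt_def.mp hσj1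
          have f3 : j.val ≠ j0.val := fun h => hj (Fin.ext h)
          have f4 : j1.val = j0.val + 1 := rfl
          simp only [Fin.le_def, Fin.lt_def]
          split_ifs <;> omega
      have hcr'0 : cr σ' j0 = 1 := by
        have hset : (univ.filter fun a : Fin n => a ≤ j0 ∧ j0 < σ' a) = {j0} := by
          ext x
          simp only [mem_filter, mem_univ, true_and, Finset.mem_singleton]
          constructor
          · rintro ⟨h1, h2⟩
            by_contra hx
            have hxj1 : x ≠ j1 := by
              intro h
              subst h
              have := Fin.le_def.mp h1
              simp only [hj1] at this
              omega
            rw [hswd x hx hxj1] at h2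
            exact hempty x ⟨h1, h2⟩
          · rintro rfl
            refine ⟨le_refl _, ?_⟩
            rw [hs1]
            exact hσj1
        unfold cr
        rw [hset, Finset.card_singleton]
      have hle' : ∀ j : Fin n, cr σ' j ≤ if P.val ≤ j.val ∧ j.val < Q.val then 1 else 0 := by
        intro j
        by_cases h : j = j0
        · subst h
          rw [hcr'0, if_pos hbox0]
        · rw [hcr'eq j h]
          exact hle j
      have hsum' : (∑ j : Fin n,
          ((if P.val ≤ j.val ∧ j.val < Q.val then 1 else 0) - cr σ' j)) ≤ k := by
        have hlt : (∑ j : Fin n,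
            ((if P.val ≤ j.val ∧ j.val < Q.val then 1 else 0) - cr σ' j))
            < ∑ j : Fin n, ((if P.val ≤ j.val ∧ j.val < Q.val then 1 else 0) - cr σ j) := by
          apply Finset.sum_lt_sum
          · intro j _
            by_cases h : j = j0
            · subst h
              rw [hcr'0, hcr0, if_pos hbox0]
              omega
            · rw [hcr'eq j h]
          · refine ⟨j0, mem_univ _, ?_⟩
            rw [hcr'0, hcr0, if_pos hbox0]
            omega
        omega
      exact Relation.ReflTransGen.head hstep (ih σ' hle' hsum')
    · push_neg at hgap
      have hcr : ∀ j : Fin n, cr σ j = if P.val ≤ j.val ∧ j.val < Q.val then 1 else 0 :=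
        fun j => le_antisymm (hle j) (hgap j)
      exact reachB hn P Q hPQ (mov σ).card σ (le_refl _) hcr

theorem list_sum_apply (l : List (Fin n → ℤ)) (j : Fin n) :
    l.sum j = (l.map fun f => f j).sum := by
  induction l with
  | nil => rfl
  | cons b t ih => rw [List.sum_cons, List.map_cons, List.sum_cons, Pi.add_apply, ih]

theorem fin_main (hn : 3 ≤ n) (β : Fin n → ℤ) (hβ : IsPosRoot β)
    (h0 : β ⟨0, by omega⟩ = 0) (l : List (Fin n → ℤ)) (hl : ∀ b ∈ l, IsPosRoot b)
    (hle : ∀ j, l.sum j ≤ β j) :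
    ble ((l.map sref).prod) (sref β) := by
  obtain ⟨P, Q, hPQ, hβrt⟩ := posRoot_interval hn hβ h0
  have hsβ : sref β = ⟨Equiv.swap P Q, 0⟩ := by
    rw [hβrt]
    exact sref_rt hn hPQ
  have hb0 : ∀ b ∈ l, b ⟨0, (by omega : 0 < n)⟩ = 0 := by
    intro b hbmem
    have h1 : 0 ≤ b ⟨0, (by omega : 0 < n)⟩ := (hl b hbmem).2 _
    have h2 : b ⟨0, (by omega : 0 < n)⟩ ≤ l.sum ⟨0, (by omega : 0 < n)⟩ := by
      rw [list_sum_apply]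
      apply List.single_le_sum
      · intro x hx
        obtain ⟨f, hf, rfl⟩ := List.mem_map.mp hx
        exact (hl f hf).2 _
      · exact List.mem_map_of_mem hbmem
    have h3 := hle ⟨0, (by omega : 0 < n)⟩
    rw [h0] at h3
    omega
  have hprod : ∀ (l' : List (Fin n → ℤ)),
      (∀ b ∈ l', IsPosRoot b ∧ b ⟨0, (by omega : 0 < n)⟩ = 0) →
      ∃ σ : Equiv.Perm (Fin n), (l'.map sref).prod = ⟨σ, 0⟩ ∧
        ∀ j : Fin n, (cr σ j : ℤ) ≤ (if h : j.val + 1 < n then l'.sum ⟨j.val + 1, h⟩ else 0) := by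
    intro l'
    induction l' with
    | nil =>
      intro _
      refine ⟨1, rfl, ?_⟩
      intro j
      rw [cr_one]
      split_ifs <;> simp
    | cons b t iht =>
      intro hall
      obtain ⟨σt, hσt, hcrt⟩ := iht (fun x hx => hall x (List.mem_cons_of_mem b hx))
      have hb := hall b (List.mem_cons_self)
      obtain ⟨pb, qb, hpq, hbrt⟩ := posRoot_interval hn hb.1 hb.2
      refine ⟨Equiv.swap pb qb * σt, ?_, ?_⟩
      · rw [List.map_cons, List.prod_cons, hσt, hbrt, sref_rt hn hpq, mk_mul_mk]
      · intro j
        have h1 : (cr (Equiv.swap pb qb * σt) j : ℤ)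
            ≤ (cr (Equiv.swap pb qb) j : ℤ) + (cr σt j : ℤ) := by
          have := cr_mul_le (Equiv.swap pb qb) σt j
          exact_mod_cast this
        have h2 : (cr (Equiv.swap pb qb) j : ℤ)
            = (if h : j.val + 1 < n then b ⟨j.val + 1, h⟩ else 0) := by
          rw [cr_swap hpq j, hbrt]
          by_cases h : j.val + 1 < n
          · rw [dif_pos h]
            show _ = if pb.val < j.val + 1 ∧ j.val + 1 ≤ qb.val then (1:ℤ) else 0
            split_ifs <;> omega
          · rw [dif_neg h]
            have hq := qb.isLt
            rw [if_neg (by omega)]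
            simp
        have h3 := hcrt j
        by_cases h : j.val + 1 < n
        · rw [dif_pos h] at h2 h3 ⊢
          have hs : (b :: t).sum ⟨j.val + 1, h⟩ = b ⟨j.val + 1, h⟩ + t.sum ⟨j.val + 1, h⟩ := by
            rw [List.sum_cons]
            rfl
          rw [hs]
          omega
        · rw [dif_neg h] at h2 h3 ⊢
          omega
  obtain ⟨σ, hσp, hcrb⟩ := hprod l (fun b hb => ⟨hl b hb, hb0 b hb⟩)
  have hcrbox : ∀ j : Fin n, cr σ j ≤ if P.val ≤ j.val ∧ j.val < Q.val then 1 else 0 := by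
    intro j
    have h1 := hcrb j
    by_cases h : j.val + 1 < n
    · rw [dif_pos h] at h1
      have h2 : l.sum ⟨j.val + 1, h⟩ ≤ β ⟨j.val + 1, h⟩ := hle _
      rw [hβrt] at h2
      have h3 : rt P Q ⟨j.val + 1, h⟩
          = if P.val < j.val + 1 ∧ j.val + 1 ≤ Q.val then (1:ℤ) else 0 := rfl
      rw [h3] at h2
      by_cases hbox : P.val ≤ j.val ∧ j.val < Q.val
      · rw [if_pos hbox]
        rw [if_pos (by omega : P.val < j.val + 1 ∧ j.val + 1 ≤ Q.val)] at h2
        have hc := h1.trans h2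
        omega
      · rw [if_neg hbox]
        rw [if_neg (by omega : ¬(P.val < j.val + 1 ∧ j.val + 1 ≤ Q.val))] at h2
        have hc := h1.trans h2
        omega
    · rw [dif_neg h] at h1
      have hQ := Q.isLt
      rw [if_neg (by omega : ¬(P.val ≤ j.val ∧ j.val < Q.val))]
      omega
  rw [hσp, hsβ]
  exact reachA hn P Q hPQ
    (∑ j : Fin n, ((if P.val ≤ j.val ∧ j.val < Q.val then 1 else 0) - cr σ j))
    σ hcrbox (le_refl _)

end Aff
end AffA

namespace AffA
namespace Aff

variable {n : ℕ}

open Finset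

/-! ### rotation of roots and conjugation by the length-zero rotation -/

/-- rotation of a root: `rotP a = a ∘ fpred` -/
def rotP (a : Fin n → ℤ) : Fin n → ℤ := fun i => a (fpred i)

/-- inverse rotation -/
def rotQ (a : Fin n → ℤ) : Fin n → ℤ := fun i => a (fsucc i)

theorem rotP_rotQ (a : Fin n → ℤ) : rotP (rotQ a) = a := by
  funext i
  show a (fsucc (fpred i)) = a i
  rw [fsucc_fpred]

theorem rotQ_rotP (a : Fin n → ℤ) : rotQ (rotP a) = a := by
  funext i
  show a (fpred (fsucc i)) = a i
  rw [fpred_fsucc]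

theorem finPart_rotP (a : Fin n → ℤ) (i : Fin n) :
    finPart (rotP a) i = finPart a (fpred i) := by
  show rotP a (fsucc i) - rotP a i = a (fsucc (fpred i)) - a (fpred i)
  unfold rotP
  rw [fpred_fsucc, fsucc_fpred]

theorem finPart_rotQ (a : Fin n → ℤ) (i : Fin n) :
    finPart (rotQ a) i = finPart a (fsucc i) := by
  show rotQ a (fsucc i) - rotQ a i = a (fsucc (fsucc i)) - a (fsucc i)
  rfl

theorem isPosRoot_rotP (hn : 3 ≤ n) {a : Fin n → ℤ} (ha : IsPosRoot a) :
    IsPosRoot (rotP a) := by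
  constructor
  · show pairing _ _ = 2
    rw [pairing_self hn]
    have h1 : ∑ i : Fin n, (finPart (rotP a) i)^2 = ∑ i : Fin n, (finPart a (fpred i))^2 :=
      Finset.sum_congr rfl (fun i _ => by rw [finPart_rotP])
    have h2 : ∑ i : Fin n, (finPart a (fpred i))^2 = ∑ i : Fin n, (finPart a i)^2 :=
      Equiv.sum_comp (cyc⁻¹ : Equiv.Perm (Fin n)) (fun i => (finPart a i)^2)
    rw [h1, h2, ← pairing_self hn]
    exact ha.1
  · intro i
    exact ha.2 _

theorem isPosRoot_rotQ (hn : 3 ≤ n) {a : Fin n → ℤ} (ha : IsPosRoot a) :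
    IsPosRoot (rotQ a) := by
  constructor
  · show pairing _ _ = 2
    rw [pairing_self hn]
    have h1 : ∑ i : Fin n, (finPart (rotQ a) i)^2 = ∑ i : Fin n, (finPart a (fsucc i))^2 :=
      Finset.sum_congr rfl (fun i _ => by rw [finPart_rotQ])
    have h2 : ∑ i : Fin n, (finPart a (fsucc i))^2 = ∑ i : Fin n, (finPart a i)^2 :=
      Equiv.sum_comp (cyc : Equiv.Perm (Fin n)) (fun i => (finPart a i)^2)
    rw [h1, h2, ← pairing_self hn]
    exact ha.1
  · intro i
    exact ha.2 _

/-- the length-zero rotation element of the extended affine Weyl group -/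
def piA (n : ℕ) : Aff n := ⟨cyc, fun i => if i.val = n - 1 then 1 else 0⟩

/-- conjugation by `piA` -/
def phi (x : Aff n) : Aff n := piA n * x * (piA n)⁻¹

/-- conjugation by `piA⁻¹` -/
def psi (x : Aff n) : Aff n := (piA n)⁻¹ * x * piA n

theorem phi_mul (x y : Aff n) : phi (x * y) = phi x * phi y := by
  unfold phi
  group

theorem phi_one : phi (1 : Aff n) = 1 := by
  unfold phi
  group

theorem psi_phi (x : Aff n) : psi (phi x) = x := by
  unfold phi psi
  group

theorem phi_psi (x : Aff n) : phi (psi x) = x := by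
  unfold phi psi
  group

theorem phi_w_apply (x : Aff n) (y : Fin n) : (phi x).w y = fsucc (x.w (fpred y)) := rfl

theorem phi_t_apply (x : Aff n) (y : Fin n) :
    (phi x).t y = ((if (x.w (fpred y)).val = n - 1 then 1 else 0) + x.t (fpred y))
      + -(if (fpred y).val = n - 1 then 1 else 0) := rfl

theorem len_eq_sum_S (x : Aff n) :
    len x = ∑ z ∈ (Finset.univ ×ˢ Finset.univ).filter (fun z : Fin n × Fin n => z.1 < z.2),
      ((if x.w z.2 < x.w z.1 then (1:ℤ) else 0) + (x.t z.1 - x.t z.2)).natAbs := by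
  rw [Finset.sum_filter, Finset.sum_product]
  rfl

theorem phi_len (hn : 3 ≤ n) (x : Aff n) : len x = len (phi x) := by
  haveI : NeZero n := ⟨by omega⟩
  rw [len_eq_sum_S, len_eq_sum_S]
  apply Finset.sum_nbij'
    (i := fun z : Fin n × Fin n =>
      if z.2.val = n - 1 then ((0 : Fin n), fsucc z.1) else (fsucc z.1, fsucc z.2))
    (j := fun z : Fin n × Fin n =>
      if z.1.val = 0 then (fpred z.2, (⟨n - 1, by omega⟩ : Fin n)) else (fpred z.1, fpred z.2))
  · -- i maps into S
    rintro ⟨p, q⟩ hz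
    simp only [Finset.mem_filter, Finset.mem_product, Finset.mem_univ, true_and,
      and_true] at hz ⊢
    have hpq : p.val < q.val := hz
    have hq := q.isLt
    by_cases h : q.val = n - 1
    · rw [if_pos h]
      show (0 : Fin n) < fsucc p
      rw [Fin.lt_def, Fin.val_zero, fsucc_val]
      split_ifs <;> omega
    · rw [if_neg h]
      show fsucc p < fsucc q
      rw [Fin.lt_def, fsucc_val, fsucc_val]
      split_ifs <;> omega
  · -- j maps into S
    rintro ⟨p, q⟩ hz
    simp only [Finset.mem_filter, Finset.mem_product, Finset.mem_univ, true_and,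
      and_true] at hz ⊢
    have hpq : p.val < q.val := hz
    have hq := q.isLt
    by_cases h : p.val = 0
    · rw [if_pos h]
      show fpred q < (⟨n - 1, by omega⟩ : Fin n)
      rw [Fin.lt_def, fpred_val]
      have hval : ((⟨n - 1, by omega⟩ : Fin n)).val = n - 1 := rfl
      rw [hval]
      split_ifs <;> omega
    · rw [if_neg h]
      show fpred p < fpred q
      rw [Fin.lt_def, fpred_val, fpred_val]
      split_ifs <;> omega
  · -- left inverse
    rintro ⟨p, q⟩ hz
    simp only [Finset.mem_filter, Finset.mem_product, Finset.mem_univ, true_and,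
      and_true] at hz
    have hpq : p.val < q.val := hz
    have hq := q.isLt
    by_cases h : q.val = n - 1
    · rw [if_pos h]
      have h0 : ((0 : Fin n), fsucc p).1.val = 0 := Fin.val_zero n
      rw [if_pos h0]
      have e1 : fpred ((0 : Fin n), fsucc p).2 = p := fpred_fsucc p
      rw [Prod.mk.injEq]
      exact ⟨e1, Fin.ext (by simp [h])⟩
    · rw [if_neg h]
      have h0 : (fsucc p, fsucc q).1.val ≠ 0 := by
        show (fsucc p).val ≠ 0
        rw [fsucc_val]
        split_ifs <;> omega
      rw [if_neg h0, Prod.mk.injEq]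
      exact ⟨fpred_fsucc p, fpred_fsucc q⟩
  · -- right inverse
    rintro ⟨p, q⟩ hz
    simp only [Finset.mem_filter, Finset.mem_product, Finset.mem_univ, true_and,
      and_true] at hz
    have hpq : p.val < q.val := hz
    have hq := q.isLt
    by_cases h : p.val = 0
    · rw [if_pos h]
      have h1 : (fpred q, (⟨n - 1, by omega⟩ : Fin n)).2.val = n - 1 := rfl
      rw [if_pos h1, Prod.mk.injEq]
      constructor
      · exact Fin.ext (by rw [Fin.val_zero]; omega)
      · exact fsucc_fpred q
    · rw [if_neg h]
      have h1 : (fpred p, fpred q).2.val ≠ n - 1 := by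
        show (fpred q).val ≠ n - 1
        rw [fpred_val]
        split_ifs <;> omega
      rw [if_neg h1, Prod.mk.injEq]
      exact ⟨fsucc_fpred p, fsucc_fpred q⟩
  · -- terms agree
    rintro ⟨p, q⟩ hz
    simp only [Finset.mem_filter, Finset.mem_product, Finset.mem_univ, true_and,
      and_true] at hz
    have hpq : p.val < q.val := hz
    have hq := q.isLt
    have hwpq : (x.w p).val ≠ (x.w q).val := by
      intro h
      have : p = q := x.w.injective (Fin.ext h)
      have := congrArg Fin.val this
      omega
    have hwp := (x.w p).isLt
    have hwq := (x.w q).isLt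
    by_cases h : q.val = n - 1
    · rw [if_pos h]
      -- pair (0, fsucc p)
      show _ = ((if (phi x).w (fsucc p) < (phi x).w (0:Fin n) then (1:ℤ) else 0)
        + ((phi x).t (0:Fin n) - (phi x).t (fsucc p))).natAbs
      rw [phi_w_apply, phi_w_apply, phi_t_apply, phi_t_apply]
      have e0 : fpred (0 : Fin n) = q := by
        apply Fin.ext
        rw [fpred_val]
        rw [if_pos (Fin.val_zero n)]
        omega
      have e1 : fpred (fsucc p) = p := fpred_fsucc p
      rw [e0, e1]
      have hinner : ((if fsucc (x.w p) < fsucc (x.w q) then (1:ℤ) else 0)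
          + (((if (x.w q).val = n - 1 then 1 else 0) + x.t q
              + -(if q.val = n - 1 then (1:ℤ) else 0))
            - ((if (x.w p).val = n - 1 then 1 else 0) + x.t p
              + -(if p.val = n - 1 then (1:ℤ) else 0))))
          = -((if x.w q < x.w p then (1:ℤ) else 0) + (x.t p - x.t q)) := by
        simp only [Fin.lt_def, fsucc_val]
        split_ifs <;> omega
      rw [hinner, Int.natAbs_neg]
    · rw [if_neg h]
      show _ = ((if (phi x).w (fsucc q) < (phi x).w (fsucc p) then (1:ℤ) else 0)
        + ((phi x).t (fsucc p) - (phi x).t (fsucc q))).natAbs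
      rw [phi_w_apply, phi_w_apply, phi_t_apply, phi_t_apply]
      rw [fpred_fsucc p, fpred_fsucc q]
      apply congrArg Int.natAbs
      simp only [Fin.lt_def, fsucc_val]
      split_ifs <;> omega

end Aff
end AffA

namespace AffA
namespace Aff

variable {n : ℕ}

theorem phi_sref (hn : 3 ≤ n) {a : Fin n → ℤ} (ha : IsPosRoot a) :
    phi (sref a) = sref (rotP a) := by
  haveI : NeZero n := ⟨by omega⟩
  obtain ⟨p, q, hpq, hf⟩ := realRoot_char hn ha.1
  have hf' : finPart (rotP a) = Pi.single (fsucc p) 1 - Pi.single (fsucc q) 1 := by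
    funext i
    rw [finPart_rotP, hf]
    simp only [Pi.sub_apply, Pi.single_apply]
    have h1 : (fpred i = p) ↔ (i = fsucc p) := by
      constructor
      · intro h; rw [← h, fsucc_fpred]
      · intro h; rw [h, fpred_fsucc]
    have h2 : (fpred i = q) ↔ (i = fsucc q) := by
      constructor
      · intro h; rw [← h, fsucc_fpred]
      · intro h; rw [h, fpred_fsucc]
    rw [if_congr h1 rfl rfl, if_congr h2 rfl rfl]
  have hpq' : fsucc p ≠ fsucc q := fun h => hpq (by rw [← fpred_fsucc p, h, fpred_fsucc])
  rw [sref_spec a p q hpq hf, sref_spec (rotP a) (fsucc p) (fsucc q) hpq' hf']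
  have h00 : (⟨0, (show 0 < n by omega)⟩ : Fin n) = (0:Fin n) := Fin.ext (Fin.val_zero n).symm
  have hw : (phi (⟨Equiv.swap p q, fun i => coeff0 a * finPart a i⟩ : Aff n)).w
      = Equiv.swap (fsucc p) (fsucc q) := by
    show cyc * Equiv.swap p q * cyc⁻¹ = _
    rw [← Equiv.swap_apply_apply (cyc : Equiv.Perm (Fin n)) p q]
    rfl
  have hziff : ∀ x : Fin n, (x.val = n - 1) ↔ x = fpred (0:Fin n) := by
    intro x
    have hz : (fpred (0:Fin n)).val = n - 1 := by rw [fpred_val, if_pos (Fin.val_zero n)]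
    rw [Fin.ext_iff, hz]
  have hc : coeff0 (rotP a) = a (fpred 0) := by
    rw [coeff0_eq (show 0 < n by omega)]
    show a (fpred ⟨0, _⟩) = a (fpred 0)
    rw [h00]
  have hrel : a (fpred (0:Fin n)) = coeff0 a - finPart a (fpred 0) := by
    show _ = _ - (a (fsucc (fpred 0)) - a (fpred 0))
    rw [fsucc_fpred, coeff0_eq (show 0 < n by omega), h00]
    ring
  have main : ∀ j : Fin n,
      ((if Equiv.swap p q j = fpred (0:Fin n) then (1:ℤ) else 0)
        + coeff0 a * ((if j = p then (1:ℤ) else 0) - (if j = q then 1 else 0)))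
        + -(if j = fpred (0:Fin n) then (1:ℤ) else 0)
      = (coeff0 a - ((if fpred (0:Fin n) = p then (1:ℤ) else 0)
          - (if fpred (0:Fin n) = q then 1 else 0)))
        * ((if j = p then (1:ℤ) else 0) - (if j = q then 1 else 0)) := by
    intro j
    by_cases hjp : j = p
    · rw [hjp, Equiv.swap_apply_left, if_pos (show p = p from rfl),
        if_neg (show ¬ p = q from hpq),
        if_congr (@eq_comm _ (fpred (0:Fin n)) p) rfl rfl,
        if_congr (@eq_comm _ (fpred (0:Fin n)) q) rfl rfl]
      ring
    · by_cases hjq : j = q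
      · rw [hjq, Equiv.swap_apply_right, if_neg (show ¬ q = p from fun h => hpq h.symm),
          if_pos (show q = q from rfl),
          if_congr (@eq_comm _ (fpred (0:Fin n)) p) rfl rfl,
          if_congr (@eq_comm _ (fpred (0:Fin n)) q) rfl rfl]
        ring
      · rw [Equiv.swap_apply_of_ne_of_ne hjp hjq, if_neg hjp, if_neg hjq]
        ring
  apply Aff.ext hw
  funext i
  rw [phi_t_apply]
  show ((if ((Equiv.swap p q) (fpred i)).val = n - 1 then (1:ℤ) else 0)
      + coeff0 a * finPart a (fpred i))
      + -(if (fpred i).val = n - 1 then (1:ℤ) else 0)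
    = coeff0 (rotP a) * finPart (rotP a) i
  rw [finPart_rotP, hc, hrel, if_congr (hziff _) rfl rfl, if_congr (hziff _) rfl rfl]
  have hfj : finPart a (fpred i)
      = (if fpred i = p then (1:ℤ) else 0) - (if fpred i = q then 1 else 0) := by
    rw [hf]
    simp [Pi.single_apply]
  have hfz : finPart a (fpred (0:Fin n))
      = (if fpred (0:Fin n) = p then (1:ℤ) else 0) - (if fpred (0:Fin n) = q then 1 else 0) := by
    rw [hf]
    simp [Pi.single_apply]
  rw [hfj, hfz]
  exact main (fpred i)

theorem bstep_phi (hn : 3 ≤ n) {u v : Aff n} (h : bstep u v) : bstep (phi u) (phi v) := by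
  obtain ⟨⟨a, ha, rfl⟩, hlen⟩ := h
  constructor
  · exact ⟨rotP a, isPosRoot_rotP hn ha, by rw [← phi_sref hn ha, phi_mul]⟩
  · rw [← phi_len hn u, ← phi_len hn (u * sref a)]
    exact hlen

theorem psi_sref (hn : 3 ≤ n) {a : Fin n → ℤ} (ha : IsPosRoot a) :
    psi (sref a) = sref (rotQ a) := by
  have h1 : phi (sref (rotQ a)) = sref (rotP (rotQ a)) := phi_sref hn (isPosRoot_rotQ hn ha)
  rw [rotP_rotQ] at h1
  rw [← h1, psi_phi]

theorem psi_len (hn : 3 ≤ n) (x : Aff n) : len x = len (psi x) := by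
  have := phi_len hn (psi x)
  rw [phi_psi] at this
  exact this.symm

theorem bstep_psi (hn : 3 ≤ n) {u v : Aff n} (h : bstep u v) : bstep (psi u) (psi v) := by
  obtain ⟨⟨a, ha, rfl⟩, hlen⟩ := h
  constructor
  · refine ⟨rotQ a, isPosRoot_rotQ hn ha, ?_⟩
    rw [← psi_sref hn ha]
    unfold psi
    group
  · rw [← psi_len hn u, ← psi_len hn (u * sref a)]
    exact hlen

theorem ble_unphi (hn : 3 ≤ n) {u v : Aff n} (h : ble (phi u) (phi v)) : ble u v := by
  have h1 : ble (psi (phi u)) (psi (phi v)) :=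
    Relation.ReflTransGen.lift psi (fun a b hab => bstep_psi hn hab) _ _ h
  rwa [psi_phi, psi_phi] at h1

theorem rot_sum (l : List (Fin n → ℤ)) : (l.map rotP).sum = rotP l.sum := by
  induction l with
  | nil => funext i; rfl
  | cons b t ih =>
    rw [List.map_cons, List.sum_cons, List.sum_cons, ih]
    funext i
    rfl

theorem prod_map_phi (hn : 3 ≤ n) (l : List (Fin n → ℤ)) (hl : ∀ b ∈ l, IsPosRoot b) :
    ((l.map rotP).map sref).prod = phi ((l.map sref).prod) := by
  induction l with
  | nil =>
    simp only [List.map_nil, List.prod_nil]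
    rw [phi_one]
  | cons b t ih =>
    simp only [List.map_cons, List.prod_cons]
    rw [ih (fun x hx => hl x (List.mem_cons_of_mem b hx)),
      ← phi_sref hn (hl b (List.mem_cons_self)), ← phi_mul]

theorem descent (hn : 3 ≤ n) : ∀ (k : ℕ) (β : Fin n → ℤ) (l : List (Fin n → ℤ)),
    IsPosRoot β → (∀ b ∈ l, IsPosRoot b) → (∀ j, l.sum j ≤ β j) →
    (β (fpred^[k] (⟨0, by omega⟩ : Fin n)) = 0) →
    ble ((l.map sref).prod) (sref β) := by
  intro k
  induction k with
  | zero =>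
    intro β l hβ hl hle h0
    exact fin_main hn β hβ h0 l hl hle
  | succ k ih =>
    intro β l hβ hl hle h0
    have h0' : (rotP β) (fpred^[k] (⟨0, by omega⟩ : Fin n)) = 0 := by
      show β (fpred (fpred^[k] _)) = 0
      rw [← Function.iterate_succ_apply' fpred k _]
      exact h0
    have hble := ih (rotP β) (l.map rotP) (isPosRoot_rotP hn hβ)
      (fun b hb => by
        obtain ⟨c, hc, rfl⟩ := List.mem_map.mp hb
        exact isPosRoot_rotP hn (hl c hc))
      (fun j => by rw [rot_sum]; exact hle (fpred j)) h0'
    rw [prod_map_phi hn l hl, ← phi_sref hn hβ] at hble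
    exact ble_unphi hn hble

theorem fpred_iter (hn : 0 < n) : ∀ k : ℕ, k < n →
    (fpred^[k] (⟨0, hn⟩ : Fin n)).val = (n - k) % n := by
  intro k
  induction k with
  | zero =>
    intro _
    show (0:ℕ) = (n - 0) % n
    rw [Nat.sub_zero, Nat.mod_self]
  | succ k ih =>
    intro hk
    rw [Function.iterate_succ_apply', fpred_val, ih (by omega)]
    by_cases h : k = 0
    · subst h
      rw [Nat.sub_zero, Nat.mod_self, if_pos rfl, Nat.mod_eq_of_lt (by omega)]
    · have h1 : (n - k) % n = n - k := Nat.mod_eq_of_lt (by omega)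
      rw [h1, if_neg (by omega), Nat.mod_eq_of_lt (by omega)]
      omega

end Aff
end AffA

open AffA Aff in
/-- if `Σ β_i ≤ β < c` then `s_{β_1} s_{β_2} ⋯ s_{β_r} ≤ s_β` in
Bruhat order. -/
theorem prod_refl_le (n : ℕ) (hn : 3 ≤ n) (β : Fin n → ℤ) (hβ : IsPosRoot β)
    (hβc : β < cvec n) (l : List (Fin n → ℤ)) (hl : ∀ b ∈ l, IsPosRoot b)
    (hsum : l.sum ≤ β) :
    ble ((l.map sref).prod) (sref β) := by
  haveI : NeZero n := ⟨by omega⟩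
  have hlt := hβc
  rw [lt_iff_le_and_ne] at hlt
  obtain ⟨hle', hne⟩ := hlt
  have hex : ∃ i : Fin n, β i = 0 := by
    by_contra hno
    push_neg at hno
    apply hne
    funext i
    have h1 : β i ≤ 1 := hle' i
    have h2 : 0 ≤ β i := hβ.2 i
    have h3 := hno i
    show β i = (1:ℤ)
    omega
  obtain ⟨i0, hi0⟩ := hex
  have hk : ∃ k : ℕ, fpred^[k] (⟨0, by omega⟩ : Fin n) = i0 := by
    by_cases h : i0.val = 0
    · exact ⟨0, Fin.ext (by simpa using h.symm)⟩
    · refine ⟨n - i0.val, Fin.ext ?_⟩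
      have hi := i0.isLt
      rw [fpred_iter (by omega) (n - i0.val) (by omega)]
      rw [show n - (n - i0.val) = i0.val by omega]
      exact Nat.mod_eq_of_lt hi
  obtain ⟨k, hkeq⟩ := hk
  apply descent hn k β l hβ hl
  · intro j
    exact hsum j
  · rw [hkeq]
    exact hi0
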